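/- arXiv:1109.2208 — 3 statements merged into one kernel-verified Lean document; each statement's English description precedes it below -/
import Mathlib

section
/- Let Z ⊆ X be closed with open complement U, and suppose every irreducible closed subset of Z has dimension < i. Then the restriction map from the free abelian group on i-dimensional irreducible closed subsets of X to the free abelian group on i-dimensional irreducible closed subsets of U (sending V to V ∩ U, which is 0 only if V ⊆ Z) is injective. -/
open FreeAbelianGroup

/-- Let `Z ⊆ X` be closed with open complement `U`, and suppose every irreducible closed
subset of `Z` has (Krull) dimension `< i`. Then the restriction map from the free abelian
group on `i`-dimensional irreducible closed subsets of `X` to that of `U`, sending `V` to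
`V ∩ U`, is injective. -/
theorem stmt_5 {X : Type*} [TopologicalSpace X] (Z U : Set X) (i : ℕ)
    (hZ : IsClosed Z) (hU : U = Zᶜ)
    (hdim : ∀ s : Set X, IsIrreducible s → IsClosed s → s ⊆ Z →
      topologicalKrullDim s < (i : WithBot ℕ∞))
    (ρ : FreeAbelianGroup
        {s : Set X // IsIrreducible s ∧ IsClosed s ∧ topologicalKrullDim s = (i : WithBot ℕ∞)} →+
        FreeAbelianGroup
        {s : Set U // IsIrreducible s ∧ IsClosed s ∧ topologicalKrullDim s = (i : WithBot ℕ∞)})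
    (hρ : ∀ v : {s : Set X // IsIrreducible s ∧ IsClosed s ∧
        topologicalKrullDim s = (i : WithBot ℕ∞)},
      ∃ h, ρ (of v) = of ⟨((↑) ⁻¹' v.1 : Set U), h⟩) :
    Function.Injective ρ := by
  have hUopen : IsOpen U := hU ▸ hZ.isOpen_compl
  let T := {s : Set X // IsIrreducible s ∧ IsClosed s ∧ topologicalKrullDim s = (i : WithBot ℕ∞)}
  let T' := {s : Set U // IsIrreducible s ∧ IsClosed s ∧ topologicalKrullDim s = (i : WithBot ℕ∞)}
  -- the basis map
  let f : T → T' := fun v => ⟨((↑) ⁻¹' v.1 : Set U), (hρ v).choose⟩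
  have hρf : ∀ v : T, ρ (of v) = of (f v) := fun v => (hρ v).choose_spec
  -- closure fact: each v is the closure of v ∩ U
  have key : ∀ v : T, closure (v.1 ∩ U) = v.1 := by
    intro v
    obtain ⟨hirr, hcl, hdimv⟩ := v.2
    have hne : (v.1 ∩ U).Nonempty := by
      rcases ((hρ v).choose.1.1 : (((↑) ⁻¹' v.1 : Set U)).Nonempty) with ⟨⟨x, hxU⟩, hx⟩
      exact ⟨x, hx, hxU⟩
    have h1 : v.1 ⊆ closure (v.1 ∩ U) :=
      subset_closure_inter_of_isPreirreducible_of_isOpen hirr.2 hUopen hne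
    exact le_antisymm (hcl.closure_subset_iff.mpr Set.inter_subset_left) h1
  have hf : Function.Injective f := by
    intro v w hvw
    have h' : ((↑) ⁻¹' v.1 : Set U) = ((↑) ⁻¹' w.1 : Set U) := congrArg Subtype.val hvw
    have h2 : U ∩ v.1 = U ∩ w.1 := Subtype.preimage_coe_eq_preimage_coe_iff.mp h'
    have : v.1 = w.1 := by
      rw [← key v, ← key w, Set.inter_comm v.1 U, Set.inter_comm w.1 U, h2]
    exact Subtype.ext this
  cases isEmpty_or_nonempty T with
  | inl h =>
    intro a b _
    have hsub : Subsingleton (T →₀ ℤ) := inferInstance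
    exact (FreeAbelianGroup.equivFinsupp T).injective (Subsingleton.elim _ _)
  | inr h =>
    obtain ⟨g, hg⟩ := hf.hasLeftInverse
    have hid : (FreeAbelianGroup.map g).comp ρ = AddMonoidHom.id _ := by
      apply FreeAbelianGroup.lift_ext
      intro v
      simp only [AddMonoidHom.coe_comp, Function.comp_apply, AddMonoidHom.id_apply,
        hρf v, FreeAbelianGroup.map_of_apply, hg v]
    intro a b hab
    calc a = (FreeAbelianGroup.map g).comp ρ a := by rw [hid]; rfl
    _ = (FreeAbelianGroup.map g).comp ρ b := by
        simp only [AddMonoidHom.coe_comp, Function.comp_apply, hab]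
    _ = b := by rw [hid]; rfl
end

section
/- Let X be a scheme, L an invertible O_X-module, and k ≥ 1. In the Grothendieck group K⁰(X) of locally free sheaves, the class 1 − [L] lies in the first step of the γ/λ-filtration; consequently, for any class ξ in the k-th step Fil^k of the topological filtration on K₀(X), [L]·ξ ≡ ξ in Gr^k_top(X), i.e. tensoring by an invertible sheaf acts trivially on the graded pieces of the topological filtration. -/
open TensorProduct

universe u

/-- A presented (finitely generated) module over `A`: a quotient of some `A^n`. -/
def PresMod (A : Type u) [CommRing A] : Type u := Σ n : ℕ, Submodule A (Fin n → A)

/-- The module presented by a `PresMod`. -/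
def PresMod.toMod {A : Type u} [CommRing A] (M : PresMod A) : Type u :=
  (Fin M.1 → A) ⧸ M.2

instance {A : Type u} [CommRing A] (M : PresMod A) : AddCommGroup M.toMod :=
  inferInstanceAs (AddCommGroup ((Fin M.1 → A) ⧸ M.2))

instance {A : Type u} [CommRing A] (M : PresMod A) : Module A M.toMod :=
  inferInstanceAs (Module A ((Fin M.1 → A) ⧸ M.2))

/-- The short-exact-sequence relations defining the Grothendieck group `K₀` of finitely
generated modules. -/
def K0Rel (A : Type u) [CommRing A] : Set (FreeAbelianGroup (PresMod A)) :=
  { x | ∃ (M M' M'' : PresMod A) (f : M'.toMod →ₗ[A] M.toMod)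
      (g : M.toMod →ₗ[A] M''.toMod), Function.Injective f ∧ Function.Surjective g ∧
      LinearMap.range f = LinearMap.ker g ∧
      x = FreeAbelianGroup.of M - FreeAbelianGroup.of M' - FreeAbelianGroup.of M'' }

/-- The Grothendieck group `K₀` of finitely generated `A`-modules (coherent sheaves on
`Spec A`). -/
def K0 (A : Type u) [CommRing A] : Type u :=
  FreeAbelianGroup (PresMod A) ⧸ AddSubgroup.closure (K0Rel A)

instance (A : Type u) [CommRing A] : AddCommGroup (K0 A) :=
  inferInstanceAs (AddCommGroup
    (FreeAbelianGroup (PresMod A) ⧸ AddSubgroup.closure (K0Rel A)))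

/-- The class of a finitely generated module in `K₀`. -/
def K0.cls {A : Type u} [CommRing A] (M : PresMod A) : K0 A :=
  QuotientAddGroup.mk (FreeAbelianGroup.of M)

/-- The support of `M` has codimension `≥ k`: every prime containing the annihilator has
height `≥ k`. -/
def SupportCodimGE {A : Type u} [CommRing A] (k : ℕ) (M : PresMod A) : Prop :=
  ∀ P : PrimeSpectrum A, Module.annihilator A M.toMod ≤ P.asIdeal →
    (k : ℕ∞) ≤ Order.height P

/-- The `k`-th step of the topological filtration on `K₀`: the subgroup generated by
classes of modules supported in codimension `≥ k`. -/
def filTop (A : Type u) [CommRing A] (k : ℕ) : AddSubgroup (K0 A) :=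
  AddSubgroup.closure { x | ∃ M : PresMod A, SupportCodimGE k M ∧ x = K0.cls M }

/-! ### K0 basics -/

variable {A : Type u} [CommRing A]

theorem K0.cls_add_of_exact (M M' M'' : PresMod A) (f : M'.toMod →ₗ[A] M.toMod)
    (g : M.toMod →ₗ[A] M''.toMod) (hf : Function.Injective f) (hg : Function.Surjective g)
    (hfg : LinearMap.range f = LinearMap.ker g) :
    K0.cls M = K0.cls M' + K0.cls M'' := by
  have h : FreeAbelianGroup.of M - FreeAbelianGroup.of M' - FreeAbelianGroup.of M''
      ∈ AddSubgroup.closure (K0Rel A) :=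
    AddSubgroup.subset_closure ⟨M, M', M'', f, g, hf, hg, hfg, rfl⟩
  have : (QuotientAddGroup.mk (FreeAbelianGroup.of M - FreeAbelianGroup.of M'
      - FreeAbelianGroup.of M'') : K0 A) = 0 := (QuotientAddGroup.eq_zero_iff _).mpr h
  rw [QuotientAddGroup.mk_sub, QuotientAddGroup.mk_sub, sub_sub, sub_eq_zero] at this
  exact this

def PresMod.zero (A : Type u) [CommRing A] : PresMod A := ⟨0, ⊥⟩

instance : Subsingleton (PresMod.zero A).toMod := by
  have h1 : Subsingleton (Fin (PresMod.zero A).1 → A) :=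
    ⟨fun a b => funext fun i => i.elim0⟩
  exact (Submodule.Quotient.mk_surjective _).subsingleton

theorem K0.cls_of_subsingleton (M : PresMod A) (h : Subsingleton M.toMod) :
    K0.cls M = 0 := by
  have : K0.cls M = K0.cls M + K0.cls M := by
    refine K0.cls_add_of_exact M M M LinearMap.id LinearMap.id
      (fun a b _ => Subsingleton.elim a b) (fun a => ⟨a, rfl⟩) ?_
    apply Subsingleton.elim (α := Submodule A M.toMod)
  exact add_eq_right.mp this.symm

theorem K0.cls_congr {M M' : PresMod A} (e : M.toMod ≃ₗ[A] M'.toMod) :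
    K0.cls M = K0.cls M' := by
  have h := K0.cls_add_of_exact M M' (PresMod.zero A) e.symm.toLinearMap 0
    e.symm.injective (fun a => ⟨0, Subsingleton.elim _ _⟩) ?_
  · rw [h, K0.cls_of_subsingleton (PresMod.zero A) inferInstance, add_zero]
  · rw [LinearMap.ker_zero, LinearMap.range_eq_top]
    exact e.symm.surjective

section Abstract

variable (A)
variable (V : Type u) [AddCommGroup V] [Module A V]

/-- A presentation of a finitely generated module. -/
noncomputable def K0.pres [Module.Finite A V] : PresMod A :=
  ⟨(Module.Finite.exists_fin' A V).choose,
    LinearMap.ker (Module.Finite.exists_fin' A V).choose_spec.choose⟩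

noncomputable def K0.presEquiv [Module.Finite A V] : (K0.pres A V).toMod ≃ₗ[A] V :=
  LinearMap.quotKerEquivOfSurjective _
    (Module.Finite.exists_fin' A V).choose_spec.choose_spec

/-- The class of an abstract finitely generated module in `K0`. -/
noncomputable def K0.clsOf [Module.Finite A V] : K0 A := K0.cls (K0.pres A V)

theorem K0.clsOf_eq_cls [Module.Finite A V] (M : PresMod A) (e : M.toMod ≃ₗ[A] V) :
    K0.clsOf A V = K0.cls M :=
  K0.cls_congr ((K0.presEquiv A V).trans e.symm)

variable {V}
variable {W : Type u} [AddCommGroup W] [Module A W]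

theorem K0.clsOf_congr [Module.Finite A V] [Module.Finite A W] (e : V ≃ₗ[A] W) :
    K0.clsOf A V = K0.clsOf A W :=
  K0.cls_congr ((K0.presEquiv A V).trans (e.trans (K0.presEquiv A W).symm))

theorem K0.clsOf_of_subsingleton [Module.Finite A V] (h : Subsingleton V) :
    K0.clsOf A V = 0 :=
  K0.cls_of_subsingleton _ ((K0.presEquiv A V).symm.surjective.subsingleton)

theorem K0.clsOf_add_of_exact {V' V'' : Type u} [AddCommGroup V'] [Module A V']
    [AddCommGroup V''] [Module A V''] [Module.Finite A V] [Module.Finite A V']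
    [Module.Finite A V''] (f : V' →ₗ[A] V) (g : V →ₗ[A] V'')
    (hf : Function.Injective f) (hg : Function.Surjective g)
    (hfg : LinearMap.range f = LinearMap.ker g) :
    K0.clsOf A V = K0.clsOf A V' + K0.clsOf A V'' := by
  set eV := K0.presEquiv A V
  set eV' := K0.presEquiv A V'
  set eV'' := K0.presEquiv A V''
  refine K0.cls_add_of_exact _ _ _
    (eV.symm.toLinearMap ∘ₗ f ∘ₗ eV'.toLinearMap)
    (eV''.symm.toLinearMap ∘ₗ g ∘ₗ eV.toLinearMap) ?_ ?_ ?_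
  · exact eV.symm.injective.comp (hf.comp eV'.injective)
  · exact eV''.symm.surjective.comp (hg.comp eV.surjective)
  · ext y
    simp only [LinearMap.mem_range, LinearMap.mem_ker, LinearMap.coe_comp,
      Function.comp_apply, LinearEquiv.coe_coe]
    constructor
    · rintro ⟨x, rfl⟩
      rw [LinearEquiv.apply_symm_apply]
      have : f (eV' x) ∈ LinearMap.ker g := hfg ▸ LinearMap.mem_range_self _ _
      rw [LinearMap.mem_ker] at this
      rw [this, map_zero]
    · intro hy
      have : eV y ∈ LinearMap.range f := by
        rw [hfg, LinearMap.mem_ker]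
        exact (map_eq_zero_iff _ eV''.symm.injective).mp hy
      obtain ⟨x, hx⟩ := this
      exact ⟨eV'.symm x, by rw [LinearEquiv.apply_symm_apply, hx, LinearEquiv.symm_apply_apply]⟩

theorem Module.annihilator_congr (e : V ≃ₗ[A] W) :
    Module.annihilator A V = Module.annihilator A W := by
  ext a
  simp only [Module.mem_annihilator]
  constructor
  · intro h m
    have := congrArg e (h (e.symm m))
    rwa [map_smul, map_zero, LinearEquiv.apply_symm_apply] at this
  · intro h m
    have := congrArg e.symm (h (e m))
    rwa [map_smul, map_zero, LinearEquiv.symm_apply_apply] at this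

theorem K0.clsOf_mem_filTop [Module.Finite A V] (k : ℕ)
    (hV : ∀ Q : PrimeSpectrum A, Module.annihilator A V ≤ Q.asIdeal →
      (k : ℕ∞) ≤ Order.height Q) :
    K0.clsOf A V ∈ filTop A k := by
  refine AddSubgroup.subset_closure ⟨K0.pres A V, ?_, rfl⟩
  intro Q hQ
  refine hV Q ?_
  rwa [Module.annihilator_congr A (K0.presEquiv A V)] at hQ

end Abstract

/-! ### Invertible module toolkit -/

section Invertible

variable {B : Type*} [CommRing B] {L N : Type*} [AddCommGroup L] [Module B L]
  [AddCommGroup N] [Module B N]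

theorem InvMod.span_trick (e : L ⊗[B] N ≃ₗ[B] B) {Q : Type*} [AddCommGroup Q] [Module B Q] (q : Q)
    (h : ∀ (l : L) (n : N), e (l ⊗ₜ n) • q = 0) : q = 0 := by
  have hzero : (LinearMap.toSpanSingleton B Q q) ∘ₗ (e : L ⊗[B] N →ₗ[B] B) = 0 :=
    TensorProduct.ext' (by intro l n; simpa using h l n)
  have h1 := LinearMap.congr_fun hzero (e.symm 1)
  simpa using h1

theorem InvMod.tmul_cancel (e : L ⊗[B] N ≃ₗ[B] B) {Q : Type*} [AddCommGroup Q] [Module B Q] (q : Q)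
    (h : ∀ n : N, (q ⊗ₜ[B] n : Q ⊗[B] N) = 0) : q = 0 := by
  refine InvMod.span_trick e q fun l n => ?_
  let φ : N →ₗ[B] B := e.toLinearMap ∘ₗ (TensorProduct.mk B L N l)
  let g : Q ⊗[B] N →ₗ[B] Q := TensorProduct.lift (φ.smulRight (LinearMap.id (M := Q))).flip
  have hg : g (q ⊗ₜ n) = e (l ⊗ₜ n) • q := by
    simp [g, φ, TensorProduct.lift.tmul]
  rw [← hg, h n, map_zero]

theorem InvMod.inv_smul_cancel (e : L ⊗[B] N ≃ₗ[B] B) [IsDomain B] {b : B} (hb : b ≠ 0) {x : L}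
    (h : b • x = 0) : x = 0 := by
  refine InvMod.tmul_cancel e x fun n => ?_
  have h1 : e ((b • x) ⊗ₜ n) = 0 := by rw [h, zero_tmul, map_zero]
  rw [← smul_tmul', map_smul, smul_eq_mul] at h1
  rcases mul_eq_zero.mp h1 with h2 | h2
  · exact absurd h2 hb
  · exact (LinearEquiv.map_eq_zero_iff e).mp h2

theorem InvMod.exists_psi (e : L ⊗[B] N ≃ₗ[B] B) [Nontrivial B] : ∃ ψ : L →ₗ[B] B, ψ ≠ 0 := by
  by_contra hc
  push_neg at hc
  have hpure : ∀ (l : L) (n : N), e (l ⊗ₜ n) = 0 := by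
    intro l n
    have := hc (e.toLinearMap ∘ₗ (TensorProduct.mk B L N).flip n)
    exact LinearMap.congr_fun this l
  have he : (e : L ⊗[B] N →ₗ[B] B) = 0 := TensorProduct.ext' (by simpa using hpure)
  have h1 := LinearMap.congr_fun he (e.symm 1)
  simp at h1

theorem InvMod.psi_injective (e : L ⊗[B] N ≃ₗ[B] B) [IsDomain B] (ψ : L →ₗ[B] B) (hψ : ψ ≠ 0) :
    Function.Injective ψ := by
  let eNL : N ⊗[B] L ≃ₗ[B] B := (TensorProduct.comm B N L) ≪≫ₗ e
  let Φ : L ⊗[B] N →ₗ[B] N := TensorProduct.lift (ψ.smulRight (LinearMap.id (M := N)))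
  set n₀ : N := Φ (e.symm 1) with hn₀def
  have key : ∀ t : L ⊗[B] N, Φ t = e t • n₀ := by
    intro t
    have ht : t = e t • (e.symm 1) := by
      conv_lhs => rw [← e.symm_apply_apply t]
      rw [← map_smul, smul_eq_mul, mul_one]
    conv_lhs => rw [ht]
    rw [map_smul]
  have key' : ∀ (l : L) (n : N), ψ l • n = e (l ⊗ₜ n) • n₀ := by
    intro l n
    have := key (l ⊗ₜ n)
    simpa [Φ, TensorProduct.lift.tmul] using this
  obtain ⟨z, hz⟩ : ∃ z, ψ z ≠ 0 := by
    by_contra h; push_neg at h; exact hψ (LinearMap.ext h)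
  have hn₀ : n₀ ≠ 0 := by
    intro h0
    have hzn : ∀ n : N, ψ z • n = 0 := fun n => by rw [key' z n, h0, smul_zero]
    have hmul : ∀ (l : L) (n : N), ψ z * e (l ⊗ₜ n) = 0 := by
      intro l n
      have h2 : e (l ⊗ₜ (ψ z • n)) = 0 := by rw [hzn, tmul_zero, map_zero]
      rwa [tmul_smul, map_smul, smul_eq_mul] at h2
    have hpure : ∀ (l : L) (n : N), e (l ⊗ₜ n) = 0 := fun l n =>
      (mul_eq_zero.mp (hmul l n)).resolve_left hz
    have he : (e : L ⊗[B] N →ₗ[B] B) = 0 := TensorProduct.ext' (by simpa using hpure)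
    have h1 := LinearMap.congr_fun he (e.symm 1)
    simp at h1
  have hker : ∀ x : L, ψ x = 0 → x = 0 := by
    intro x hx
    have hxn : ∀ n : N, e (x ⊗ₜ n) • n₀ = 0 := fun n => by
      rw [← key' x n, hx, zero_smul]
    have hxe : ∀ n : N, e (x ⊗ₜ n) = 0 := by
      intro n
      by_contra hce
      exact hn₀ (InvMod.inv_smul_cancel eNL hce (hxn n))
    refine InvMod.tmul_cancel e x fun n => ?_
    exact (LinearEquiv.map_eq_zero_iff e).mp (hxe n)
  intro a b hab
  have h3 : ψ (a - b) = 0 := by rw [map_sub, hab, sub_self]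
  exact sub_eq_zero.mp (hker _ h3)

theorem InvMod.finite (e : L ⊗[B] N ≃ₗ[B] B) : Module.Finite B L := by
  classical
  obtain ⟨S, hS⟩ := TensorProduct.exists_finset (e.symm 1)
  set L₀ : Submodule B L := Submodule.span B ((S.image Prod.fst : Finset L) : Set L) with hL₀
  have hmem : ∀ x : L, x ∈ L₀ := by
    intro x
    set F : L ⊗[B] N →ₗ[B] (L ⧸ L₀) ⊗[B] N := LinearMap.rTensor N L₀.mkQ with hF
    have hFt : F (e.symm 1) = 0 := by
      rw [hS, map_sum]
      refine Finset.sum_eq_zero fun p hp => ?_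
      have hp1 : (p.1 : L) ∈ L₀ :=
        Submodule.subset_span (by simpa using Finset.mem_image_of_mem Prod.fst hp)
      rw [LinearMap.rTensor_tmul]
      rw [show L₀.mkQ p.1 = 0 from (Submodule.Quotient.mk_eq_zero L₀).mpr hp1, zero_tmul]
    have hFall : ∀ t : L ⊗[B] N, F t = 0 := by
      intro t
      have ht : t = e t • (e.symm 1) := by
        conv_lhs => rw [← e.symm_apply_apply t]
        rw [← map_smul, smul_eq_mul, mul_one]
      rw [ht, map_smul, hFt, smul_zero]
    have hx : ∀ n : N, ((Submodule.Quotient.mk x : L ⧸ L₀) ⊗ₜ[B] n) = 0 := by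
      intro n
      have := hFall (x ⊗ₜ n)
      rwa [hF, LinearMap.rTensor_tmul] at this
    have := InvMod.tmul_cancel e (Submodule.Quotient.mk x : L ⧸ L₀) hx
    exact (Submodule.Quotient.mk_eq_zero L₀).mp this
  exact ⟨⟨S.image Prod.fst, Submodule.eq_top_iff'.mpr hmem⟩⟩

theorem InvMod.lTensor_injective (e : L ⊗[B] N ≃ₗ[B] B) {M₁ M₂ : Type*} [AddCommGroup M₁] [Module B M₁]
    [AddCommGroup M₂] [Module B M₂] {f : M₁ →ₗ[B] M₂} (hf : Function.Injective f) :
    Function.Injective (LinearMap.lTensor L f) := by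
  let eNL : N ⊗[B] L ≃ₗ[B] B := (TensorProduct.comm B N L) ≪≫ₗ e
  let u₁ : N ⊗[B] (L ⊗[B] M₁) ≃ₗ[B] M₁ :=
    (TensorProduct.assoc B N L M₁).symm ≪≫ₗ
      TensorProduct.congr eNL (LinearEquiv.refl B M₁) ≪≫ₗ TensorProduct.lid B M₁
  let u₂ : N ⊗[B] (L ⊗[B] M₂) ≃ₗ[B] M₂ :=
    (TensorProduct.assoc B N L M₂).symm ≪≫ₗ
      TensorProduct.congr eNL (LinearEquiv.refl B M₂) ≪≫ₗ TensorProduct.lid B M₂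
  have nat : ∀ t : N ⊗[B] (L ⊗[B] M₁),
      u₂ ((f.lTensor L).lTensor N t) = f (u₁ t) := by
    intro t
    induction t using TensorProduct.induction_on with
    | zero => simp
    | add a b ha hb => simp only [map_add, ha, hb]
    | tmul n s =>
      induction s using TensorProduct.induction_on with
      | zero => simp
      | add a b ha hb => simp only [tmul_add, map_add, ha, hb]
      | tmul l m =>
        simp [u₁, u₂, LinearMap.lTensor_tmul, map_smul]
  have hG : Function.Injective ((f.lTensor L).lTensor N) := by
    intro a b hab
    have h1 : f (u₁ a) = f (u₁ b) := by rw [← nat, ← nat, hab]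
    exact u₁.injective (hf h1)
  have hker : ∀ t, f.lTensor L t = 0 → t = 0 := by
    intro t ht
    have hnt : ∀ n : N, (n ⊗ₜ[B] t : N ⊗[B] (L ⊗[B] M₁)) = 0 := by
      intro n
      apply hG
      rw [LinearMap.lTensor_tmul, ht, tmul_zero, map_zero]
    refine InvMod.tmul_cancel e t fun n => ?_
    have := congrArg (TensorProduct.comm B N (L ⊗[B] M₁)) (hnt n)
    rwa [TensorProduct.comm_tmul, map_zero] at this
  intro a b hab
  have h3 : f.lTensor L (a - b) = 0 := by rw [map_sub, hab, sub_self]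
  exact sub_eq_zero.mp (hker _ h3)

end Invertible

/-! ### Height step -/

theorem ht_succ {A : Type u} [CommRing A] {P Q : PrimeSpectrum A} (k : ℕ)
    (hk : (k : ℕ∞) ≤ Order.height P) (h : P < Q) :
    ((k + 1 : ℕ) : ℕ∞) ≤ Order.height Q := by
  have h1 : Order.height P + 1 ≤ Order.height Q := by
    rw [Order.height_eq_iSup_lt_height Q]
    exact le_iSup₂_of_le P h le_rfl
  refine le_trans ?_ h1
  rw [Nat.cast_add, Nat.cast_one]
  exact add_le_add hk le_rfl

/-! ### The base case: cyclic modules `A ⧸ P` -/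

theorem K0.base {A : Type u} [CommRing A] [IsNoetherianRing A]
    (L L' : Type u) [AddCommGroup L] [Module A L] [AddCommGroup L'] [Module A L']
    [Module.Finite A L]
    (e0 : (L ⊗[A] L') ≃ₗ[A] A) (k : ℕ) (P : Ideal A) [P.IsPrime]
    (hP : ∀ Q : PrimeSpectrum A, P ≤ Q.asIdeal → (k : ℕ∞) ≤ Order.height Q) :
    K0.clsOf A (L ⊗[A] (A ⧸ P)) - K0.clsOf A (A ⧸ P) ∈ filTop A (k + 1) := by
  -- base change to `B = A ⧸ P`
  let eB : ((A ⧸ P) ⊗[A] L) ⊗[A ⧸ P] ((A ⧸ P) ⊗[A] L') ≃ₗ[A ⧸ P] (A ⧸ P) :=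
    TensorProduct.AlgebraTensorModule.cancelBaseChange A (A ⧸ P) (A ⧸ P)
        ((A ⧸ P) ⊗[A] L) L' ≪≫ₗ
      TensorProduct.AlgebraTensorModule.assoc A A (A ⧸ P) (A ⧸ P) L L' ≪≫ₗ
      LinearEquiv.baseChange A (A ⧸ P) _ _ e0 ≪≫ₗ
      TensorProduct.AlgebraTensorModule.rid A (A ⧸ P) (A ⧸ P)
  obtain ⟨ψ, hψ⟩ := InvMod.exists_psi eB
  have hinj : Function.Injective ψ := InvMod.psi_injective eB ψ hψ
  set I : Submodule (A ⧸ P) (A ⧸ P) := LinearMap.range ψ with hI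
  haveI : Module.Finite A ((A ⧸ P) ⊗[A] L) := Module.Finite.trans (A ⧸ P) _
  -- the short exact sequence 0 → (A⧸P) ⊗ L → A⧸P → (A⧸P)⧸I → 0 over A
  have hadd : K0.clsOf A (A ⧸ P) =
      K0.clsOf A ((A ⧸ P) ⊗[A] L) + K0.clsOf A ((A ⧸ P) ⧸ I) := by
    refine K0.clsOf_add_of_exact A (ψ.restrictScalars A) (I.mkQ.restrictScalars A)
      hinj (Submodule.mkQ_surjective I) ?_
    ext y
    simp only [LinearMap.mem_range, LinearMap.mem_ker, LinearMap.coe_restrictScalars,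
      Submodule.mkQ_apply, Submodule.Quotient.mk_eq_zero]
    exact Iff.rfl
  have hcomm : K0.clsOf A (L ⊗[A] (A ⧸ P)) = K0.clsOf A ((A ⧸ P) ⊗[A] L) :=
    K0.clsOf_congr A (TensorProduct.comm A L (A ⧸ P))
  have hdiff : K0.clsOf A (L ⊗[A] (A ⧸ P)) - K0.clsOf A (A ⧸ P) =
      - K0.clsOf A ((A ⧸ P) ⧸ I) := by
    rw [hcomm, hadd]; abel
  rw [hdiff]
  refine neg_mem ?_
  refine K0.clsOf_mem_filTop A (k + 1) ?_
  -- the annihilator of `(A⧸P)⧸I` contains `P` and an element outside `P`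
  obtain ⟨z, hz⟩ : ∃ z, ψ z ≠ 0 := by
    by_contra hcon; push_neg at hcon; exact hψ (LinearMap.ext hcon)
  obtain ⟨a₀, ha₀⟩ := Ideal.Quotient.mk_surjective (I := P) (ψ z)
  have ha₀P : a₀ ∉ P := fun hmem => hz (by
    rw [← ha₀] at *
    exact (Ideal.Quotient.eq_zero_iff_mem.mpr hmem))
  have hPle : P ≤ Module.annihilator A ((A ⧸ P) ⧸ I) := by
    intro a ha
    rw [Module.mem_annihilator]
    intro m
    obtain ⟨y, rfl⟩ := Submodule.Quotient.mk_surjective I m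
    rw [← Submodule.Quotient.mk_smul]
    have hay : a • y = 0 := by
      rw [← algebraMap_smul (A ⧸ P) a y, show algebraMap A (A ⧸ P) a = 0 from
        Ideal.Quotient.eq_zero_iff_mem.mpr ha, zero_smul]
    rw [hay, Submodule.Quotient.mk_zero]
  have ha₀ann : a₀ ∈ Module.annihilator A ((A ⧸ P) ⧸ I) := by
    rw [Module.mem_annihilator]
    intro m
    obtain ⟨y, rfl⟩ := Submodule.Quotient.mk_surjective I m
    rw [← Submodule.Quotient.mk_smul]
    have hay : a₀ • y = ψ (y • z) := by
      rw [← algebraMap_smul (A ⧸ P) a₀ y, map_smul, smul_eq_mul, smul_eq_mul]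
      rw [show algebraMap A (A ⧸ P) a₀ = ψ z from ha₀ ▸ rfl]
      ring
    rw [hay, show (Submodule.Quotient.mk (ψ (y • z)) : (A ⧸ P) ⧸ I) = 0 from
      (Submodule.Quotient.mk_eq_zero I).mpr ⟨y • z, rfl⟩]
  intro Q hQ
  set PP : PrimeSpectrum A := ⟨P, inferInstance⟩ with hPP
  have hlt : PP < Q := by
    rw [← PrimeSpectrum.asIdeal_lt_asIdeal]
    refine lt_of_le_of_ne (le_trans hPle hQ) ?_
    intro heq
    have hmemQ : a₀ ∈ Q.asIdeal := hQ ha₀ann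
    rw [← heq] at hmemQ
    exact ha₀P hmemQ
  exact ht_succ k (hP PP le_rfl) hlt

/-! ### Dévissage -/

theorem K0.main {A : Type u} [CommRing A] [IsNoetherianRing A]
    (L L' : Type u) [AddCommGroup L] [Module A L] [AddCommGroup L'] [Module A L']
    [Module.Finite A L] (e0 : (L ⊗[A] L') ≃ₗ[A] A) (k : ℕ)
    (V : Type u) [AddCommGroup V] [Module A V] [Module.Finite A V]
    (hV : ∀ Q : PrimeSpectrum A, Module.annihilator A V ≤ Q.asIdeal →
      (k : ℕ∞) ≤ Order.height Q) :
    K0.clsOf A (L ⊗[A] V) - K0.clsOf A V ∈ filTop A (k + 1) := by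
  suffices key : ∀ W : Submodule A V,
      K0.clsOf A (L ⊗[A] (V ⧸ W)) - K0.clsOf A (V ⧸ W) ∈ filTop A (k + 1) by
    have h := key ⊥
    have e1 : (V ⧸ (⊥ : Submodule A V)) ≃ₗ[A] V := Submodule.quotEquivOfEqBot ⊥ rfl
    rwa [K0.clsOf_congr A e1,
      K0.clsOf_congr A (TensorProduct.congr (LinearEquiv.refl A L) e1)] at h
  intro W
  induction W using IsNoetherian.induction with
  | _ W ih =>
  by_cases hs : Subsingleton (V ⧸ W)
  · have h1 : K0.clsOf A (V ⧸ W) = 0 := K0.clsOf_of_subsingleton A hs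
    have hsub : Subsingleton (L ⊗[A] (V ⧸ W)) := by
      constructor
      intro a b
      have hid : (LinearMap.id : (V ⧸ W) →ₗ[A] (V ⧸ W)) = 0 :=
        LinearMap.ext fun x => Subsingleton.elim _ _
      have h2 : (LinearMap.id : L ⊗[A] (V ⧸ W) →ₗ[A] L ⊗[A] (V ⧸ W)) = 0 := by
        rw [← LinearMap.lTensor_id, hid, LinearMap.lTensor_zero]
      have ha := LinearMap.congr_fun h2 a
      have hb := LinearMap.congr_fun h2 b
      simp only [LinearMap.id_apply, LinearMap.zero_apply] at ha hb
      rw [ha, hb]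
    rw [h1, K0.clsOf_of_subsingleton A hsub, sub_zero]
    exact zero_mem _
  · haveI hnt : Nontrivial (V ⧸ W) := not_subsingleton_iff_nontrivial.mp hs
    obtain ⟨Pa, hPa⟩ := associatedPrimes.nonempty A (V ⧸ W)
    obtain ⟨hprime, x, hx⟩ := isAssociatedPrime_iff.mp hPa
    rw [Submodule.bot_colon'] at hx
    haveI := hprime
    have hx0 : x ≠ 0 := by
      rintro rfl
      refine hprime.ne_top (Ideal.eq_top_iff_one _ |>.mpr ?_)
      rw [hx, Submodule.mem_annihilator_span_singleton]
      simp
    set S : Submodule A (V ⧸ W) := Submodule.span A {x} with hSdef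
    have hker : LinearMap.ker (LinearMap.toSpanSingleton A (V ⧸ W) x) = Pa := by
      ext a
      rw [LinearMap.mem_ker, hx, Submodule.mem_annihilator_span_singleton,
        LinearMap.toSpanSingleton_apply]
    have eS : (A ⧸ Pa) ≃ₗ[A] S :=
      (Submodule.quotEquivOfEq _ _ hker.symm) ≪≫ₗ
        ((LinearMap.toSpanSingleton A (V ⧸ W) x).quotKerEquivRange ≪≫ₗ
          LinearEquiv.ofEq _ _ (LinearMap.span_singleton_eq_range A (V ⧸ W) x).symm)
    set W' : Submodule A V := S.comap W.mkQ with hW'def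
    have hWW' : W < W' := by
      obtain ⟨v, hv⟩ := Submodule.mkQ_surjective W x
      refine lt_of_le_of_ne (fun u hu => ?_) (fun heq => ?_)
      · have : W.mkQ u = 0 := (Submodule.Quotient.mk_eq_zero W).mpr hu
        simp only [hW'def, Submodule.mem_comap, this]
        exact zero_mem S
      · have hvW' : v ∈ W' := by
          simp only [hW'def, Submodule.mem_comap, hv]
          exact Submodule.mem_span_singleton_self x
        rw [← heq] at hvW'
        exact hx0 (by rw [← hv]; exact (Submodule.Quotient.mk_eq_zero W).mpr hvW')
    have hmap : Submodule.map W.mkQ W' = S := by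
      rw [hW'def, Submodule.map_comap_eq, Submodule.range_mkQ, top_inf_eq]
    have hle : W ≤ W' := le_of_lt hWW'
    let q2 : ((V ⧸ W) ⧸ Submodule.map W.mkQ W') ≃ₗ[A] V ⧸ W' :=
      Submodule.quotientQuotientEquivQuotient W W' hle
    let g' : (V ⧸ W) →ₗ[A] V ⧸ W' := q2.toLinearMap ∘ₗ (Submodule.map W.mkQ W').mkQ
    have hg'surj : Function.Surjective g' :=
      q2.surjective.comp (Submodule.mkQ_surjective _)
    have hg'ker : LinearMap.ker g' = S := by
      show LinearMap.ker (q2.toLinearMap.comp (Submodule.map W.mkQ W').mkQ) = S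
      rw [LinearMap.ker_comp, LinearEquiv.ker, Submodule.comap_bot, Submodule.ker_mkQ, hmap]
    haveI : Module.Finite A S := Module.Finite.iff_fg.mpr (IsNoetherian.noetherian S)
    have hseq : K0.clsOf A (V ⧸ W) = K0.clsOf A S + K0.clsOf A (V ⧸ W') :=
      K0.clsOf_add_of_exact A S.subtype g' (Submodule.injective_subtype S) hg'surj
        (by rw [Submodule.range_subtype, hg'ker])
    have hexact : Function.Exact S.subtype g' := by
      rw [LinearMap.exact_iff, Submodule.range_subtype, hg'ker]
    have hLseq : K0.clsOf A (L ⊗[A] (V ⧸ W)) =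
        K0.clsOf A (L ⊗[A] S) + K0.clsOf A (L ⊗[A] (V ⧸ W')) := by
      refine K0.clsOf_add_of_exact A (S.subtype.lTensor L) (g'.lTensor L)
        (InvMod.lTensor_injective e0 (Submodule.injective_subtype S))
        (LinearMap.lTensor_surjective L hg'surj) ?_
      have hex2 := lTensor_exact L hexact hg'surj
      rw [LinearMap.exact_iff] at hex2
      exact hex2.symm
    have hannle : Module.annihilator A V ≤ Pa := by
      rw [hx]
      intro a ha
      rw [Submodule.mem_annihilator_span_singleton]
      rw [Module.mem_annihilator] at ha
      obtain ⟨v, rfl⟩ := Submodule.mkQ_surjective W x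
      rw [← map_smul, ha v, map_zero]
    have hbase : K0.clsOf A (L ⊗[A] (A ⧸ Pa)) - K0.clsOf A (A ⧸ Pa) ∈ filTop A (k + 1) :=
      K0.base L L' e0 k Pa fun Q hQ => hV Q (le_trans hannle hQ)
    have hSc : K0.clsOf A S = K0.clsOf A (A ⧸ Pa) := (K0.clsOf_congr A eS).symm
    have hLSc : K0.clsOf A (L ⊗[A] S) = K0.clsOf A (L ⊗[A] (A ⧸ Pa)) :=
      K0.clsOf_congr A (TensorProduct.congr (LinearEquiv.refl A L) eS.symm)
    have hsplit : K0.clsOf A (L ⊗[A] (V ⧸ W)) - K0.clsOf A (V ⧸ W) =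
        (K0.clsOf A (L ⊗[A] (A ⧸ Pa)) - K0.clsOf A (A ⧸ Pa)) +
        (K0.clsOf A (L ⊗[A] (V ⧸ W')) - K0.clsOf A (V ⧸ W')) := by
      rw [hseq, hLseq, hLSc, hSc]; abel
    rw [hsplit]
    exact add_mem hbase (ih W' hWW')


/-- Tensoring by an invertible module acts trivially on the graded pieces of the
topological filtration: for a noetherian ring `A`, an invertible module `L`, and a
finitely generated module `M` supported in codimension `≥ k`,
`[L ⊗ M] − [M] ∈ Fil^{k+1}_top`. -/
theorem stmt_12 {A : Type u} [CommRing A] [IsNoetherianRing A]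
    (L L' : Type u) [AddCommGroup L] [Module A L] [AddCommGroup L'] [Module A L']
    (hinv : Nonempty ((L ⊗[A] L') ≃ₗ[A] A)) (k : ℕ)
    (M : PresMod A) (hM : SupportCodimGE k M)
    (N : PresMod A) (hN : Nonempty (N.toMod ≃ₗ[A] (L ⊗[A] M.toMod))) :
    K0.cls N - K0.cls M ∈ filTop A (k + 1) := by
  obtain ⟨e0⟩ := hinv
  obtain ⟨eN⟩ := hN
  haveI : Module.Finite A L := InvMod.finite e0
  haveI : Module.Finite A M.toMod :=
    inferInstanceAs (Module.Finite A ((Fin M.1 → A) ⧸ M.2))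
  have h1 : K0.cls N = K0.clsOf A (L ⊗[A] M.toMod) :=
    (K0.clsOf_eq_cls A _ N eN).symm
  have h2 : K0.cls M = K0.clsOf A M.toMod :=
    (K0.clsOf_eq_cls A _ M (LinearEquiv.refl A M.toMod)).symm
  rw [h1, h2]
  exact K0.main L L' e0 k M.toMod hM
end

section
/- Let X₁, X₂, X₃ be schemes over a base S, and let Z₁ ⊆ X₁ ×_S X₂, Z₂ ⊆ X₂ ×_S X₃ be closed subschemes such that both projections Z₁ → X₁, Z₁ → X₂ are finite, and both projections Z₂ → X₂, Z₂ → X₃ are finite. Let Y = (X₁ ×_S Z₂) ∩ (Z₁ ×_S X₃) ⊆ X₁ ×_S X₂ ×_S X₃ (scheme-theoretic intersection). Then the projections Y → X₁ and Y → X₃ are finite morphisms. -/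
open AlgebraicGeometry CategoryTheory CategoryTheory.Limits

noncomputable section

variable {S X₁ X₂ X₃ : Scheme} (f₁ : X₁ ⟶ S) (f₂ : X₂ ⟶ S) (f₃ : X₃ ⟶ S)

/-- The triple fiber product `X₁ ×_S X₂ ×_S X₃`. -/
def tripleProd : Scheme := pullback (pullback.snd f₁ f₂ ≫ f₂) f₃

/-- Projection `X₁ ×_S X₂ ×_S X₃ ⟶ X₁ ×_S X₂`. -/
def p₁₂ : tripleProd f₁ f₂ f₃ ⟶ pullback f₁ f₂ :=
  pullback.fst (pullback.snd f₁ f₂ ≫ f₂) f₃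

/-- Projection `X₁ ×_S X₂ ×_S X₃ ⟶ X₃`. -/
def p₃ : tripleProd f₁ f₂ f₃ ⟶ X₃ :=
  pullback.snd (pullback.snd f₁ f₂ ≫ f₂) f₃

/-- Projection `X₁ ×_S X₂ ×_S X₃ ⟶ X₂ ×_S X₃`. -/
def p₂₃ : tripleProd f₁ f₂ f₃ ⟶ pullback f₂ f₃ :=
  pullback.lift (p₁₂ f₁ f₂ f₃ ≫ pullback.snd f₁ f₂) (p₃ f₁ f₂ f₃)
    (by rw [Category.assoc]; exact pullback.condition (f := pullback.snd f₁ f₂ ≫ f₂) (g := f₃))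

/-- A morphism `f` is finite if `f ≫ g` is finite and `g` is separated. -/
lemma finite_of_comp' {X Y Z : Scheme} (f : X ⟶ Y) (g : Y ⟶ Z) [IsFinite (f ≫ g)]
    [IsSeparated g] : IsFinite f := by
  rw [← pullback.lift_snd (𝟙 _) f (Category.id_comp (f ≫ g))]
  have : IsFinite (pullback.snd (f ≫ g) g) := inferInstance
  infer_instance

/-- The square expressing the triple product as `(X₁ ×_S X₂) ×_{X₂} (X₂ ×_S X₃)`. -/
lemma sqB : IsPullback (p₂₃ f₁ f₂ f₃) (p₁₂ f₁ f₂ f₃) (pullback.fst f₂ f₃)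
    (pullback.snd f₁ f₂) := by
  have s : IsPullback (p₂₃ f₁ f₂ f₃ ≫ pullback.snd f₂ f₃) (p₁₂ f₁ f₂ f₃) f₃
      (pullback.snd f₁ f₂ ≫ f₂) := by
    rw [show p₂₃ f₁ f₂ f₃ ≫ pullback.snd f₂ f₃ = p₃ f₁ f₂ f₃ from pullback.lift_snd _ _ _]
    exact (IsPullback.of_hasPullback (pullback.snd f₁ f₂ ≫ f₂) f₃).flip
  exact IsPullback.of_right s (pullback.lift_fst _ _ _)
    (IsPullback.of_hasPullback f₂ f₃).flip

/-- Let `Z₁ ⊆ X₁ ×_S X₂` and `Z₂ ⊆ X₂ ×_S X₃` be closed subschemes whose projections to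
the factors are all finite. Let `Y = (X₁ ×_S Z₂) ∩ (Z₁ ×_S X₃)` (scheme-theoretic
intersection inside `X₁ ×_S X₂ ×_S X₃`). Then the projections `Y ⟶ X₁` and `Y ⟶ X₃` are
finite. -/
theorem stmt_15 {Z₁ Z₂ : Scheme} (ι₁ : Z₁ ⟶ pullback f₁ f₂) (ι₂ : Z₂ ⟶ pullback f₂ f₃)
    [IsClosedImmersion ι₁] [IsClosedImmersion ι₂]
    (h₁₁ : IsFinite (ι₁ ≫ pullback.fst f₁ f₂)) (h₁₂ : IsFinite (ι₁ ≫ pullback.snd f₁ f₂))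
    (h₂₂ : IsFinite (ι₂ ≫ pullback.fst f₂ f₃)) (h₂₃ : IsFinite (ι₂ ≫ pullback.snd f₂ f₃)) :
    -- `Y` is the fiber product of `Z₁ ×_S X₃ = pullback (p₁₂) ι₁` and
    -- `X₁ ×_S Z₂ = pullback (p₂₃) ι₂` over the triple product, with its map to the
    -- triple product; we assert both composite projections are finite.
    IsFinite ((pullback.fst (pullback.fst (p₁₂ f₁ f₂ f₃) ι₁)
        (pullback.fst (p₂₃ f₁ f₂ f₃) ι₂) ≫ pullback.fst (p₁₂ f₁ f₂ f₃) ι₁) ≫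
        p₁₂ f₁ f₂ f₃ ≫ pullback.fst f₁ f₂) ∧
    IsFinite ((pullback.fst (pullback.fst (p₁₂ f₁ f₂ f₃) ι₁)
        (pullback.fst (p₂₃ f₁ f₂ f₃) ι₂) ≫ pullback.fst (p₁₂ f₁ f₂ f₃) ι₁) ≫
        p₃ f₁ f₂ f₃) := by
  -- Notation: W₁ = Z₁ ×_S X₃, W₂ = X₁ ×_S Z₂, Y = W₁ ×_T W₂.
  set a := pullback.fst (p₁₂ f₁ f₂ f₃) ι₁ with ha
  set b := pullback.snd (p₁₂ f₁ f₂ f₃) ι₁ with hb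
  set c := pullback.fst (p₂₃ f₁ f₂ f₃) ι₂ with hc
  set d := pullback.snd (p₂₃ f₁ f₂ f₃) ι₂ with hd
  set u := pullback.fst a c with hu
  set v := pullback.snd a c with hv
  have sqW₁ : IsPullback a b (p₁₂ f₁ f₂ f₃) ι₁ := IsPullback.of_hasPullback _ _
  have sqW₂ : IsPullback c d (p₂₃ f₁ f₂ f₃) ι₂ := IsPullback.of_hasPullback _ _
  have sqY : IsPullback u v a c := IsPullback.of_hasPullback a c
  -- `W₁ ⟶ X₂ ×_S X₃` is the base change of the finite `Z₁ ⟶ X₂`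
  have big₁ : IsPullback (a ≫ p₂₃ f₁ f₂ f₃) b (pullback.fst f₂ f₃)
      (ι₁ ≫ pullback.snd f₁ f₂) := sqW₁.paste_horiz (sqB f₁ f₂ f₃)
  haveI fin₁ : IsFinite (a ≫ p₂₃ f₁ f₂ f₃) :=
    MorphismProperty.of_isPullback big₁.flip h₁₂
  -- `W₂ ⟶ X₁ ×_S X₂` is the base change of the finite `Z₂ ⟶ X₂`
  have big₂ : IsPullback (c ≫ p₁₂ f₁ f₂ f₃) d (pullback.snd f₁ f₂)
      (ι₂ ≫ pullback.fst f₂ f₃) := sqW₂.paste_horiz (sqB f₁ f₂ f₃).flip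
  haveI fin₂ : IsFinite (c ≫ p₁₂ f₁ f₂ f₃) :=
    MorphismProperty.of_isPullback big₂.flip h₂₂
  -- the four projections among the fibre products are closed immersions
  haveI : IsClosedImmersion a :=
    MorphismProperty.of_isPullback sqW₁.flip inferInstance
  haveI : IsClosedImmersion c :=
    MorphismProperty.of_isPullback sqW₂.flip inferInstance
  haveI : IsClosedImmersion u := MorphismProperty.of_isPullback sqY.flip ‹IsClosedImmersion c›
  haveI : IsClosedImmersion v := MorphismProperty.of_isPullback sqY ‹IsClosedImmersion a›
  -- `Y ⟶ Z₁` is finite, by cancellation against the closed immersion `ι₁`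
  haveI : IsFinite ((u ≫ b) ≫ ι₁) := by
    have : (u ≫ b) ≫ ι₁ = v ≫ c ≫ p₁₂ f₁ f₂ f₃ := by
      simp only [Category.assoc]
      rw [← sqW₁.w, ← Category.assoc, sqY.w, Category.assoc]
    rw [this]
    infer_instance
  haveI finYZ₁ : IsFinite (u ≫ b) := finite_of_comp' (u ≫ b) ι₁
  -- `Y ⟶ Z₂` is finite, by cancellation against the closed immersion `ι₂`
  haveI : IsFinite ((v ≫ d) ≫ ι₂) := by
    have : (v ≫ d) ≫ ι₂ = u ≫ a ≫ p₂₃ f₁ f₂ f₃ := by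
      simp only [Category.assoc]
      rw [← sqW₂.w, ← Category.assoc, ← sqY.w, Category.assoc]
    rw [this]
    infer_instance
  haveI finYZ₂ : IsFinite (v ≫ d) := finite_of_comp' (v ≫ d) ι₂
  constructor
  · -- `Y ⟶ X₁` factors as `Y ⟶ Z₁ ⟶ X₁`
    have : (u ≫ a) ≫ p₁₂ f₁ f₂ f₃ ≫ pullback.fst f₁ f₂ =
        (u ≫ b) ≫ ι₁ ≫ pullback.fst f₁ f₂ := by
      simp only [Category.assoc]
      rw [← Category.assoc a, sqW₁.w, Category.assoc]
    rw [this]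
    exact inferInstanceAs (IsFinite ((u ≫ b) ≫ ι₁ ≫ pullback.fst f₁ f₂))
  · -- `Y ⟶ X₃` factors as `Y ⟶ Z₂ ⟶ X₃`
    have : (u ≫ a) ≫ p₃ f₁ f₂ f₃ = (v ≫ d) ≫ ι₂ ≫ pullback.snd f₂ f₃ := by
      rw [show p₃ f₁ f₂ f₃ = p₂₃ f₁ f₂ f₃ ≫ pullback.snd f₂ f₃ from
        (pullback.lift_snd _ _ _).symm, sqY.w]
      simp only [Category.assoc]
      rw [← Category.assoc c, sqW₂.w, Category.assoc]
    rw [this]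
    exact inferInstanceAs (IsFinite ((v ≫ d) ≫ ι₂ ≫ pullback.snd f₂ f₃))

end
end
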